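/- For the concatenation of two bracket sequences s and t, the reduced form of s ++ t can be computed from the reduced forms of s and t: if red(s) = )^a (^b and red(t) = )^c (^d, then red(s ++ t) = )^(a + max(c - b, 0)) (^(d + max(b - c, 0)). -/

import Mathlib

/-- Brackets: `true` is a left bracket `(`, `false` is a right bracket `)`. -/
inductive BStep : List Bool → List Bool → Prop
  | mk (a b : List Bool) : BStep (a ++ [true, false] ++ b) (a ++ b)

lemma bstep_left (l : List Bool) {x y : List Bool} (h : BStep x y) :
    BStep (l ++ x) (l ++ y) := by
  cases h with
  | mk a b => simpa [List.append_assoc] using BStep.mk (l ++ a) b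

lemma bstep_right (r : List Bool) {x y : List Bool} (h : BStep x y) :
    BStep (x ++ r) (y ++ r) := by
  cases h with
  | mk a b => simpa [List.append_assoc] using BStep.mk a (b ++ r)

lemma rtg_left (l : List Bool) {x y : List Bool}
    (h : Relation.ReflTransGen BStep x y) :
    Relation.ReflTransGen BStep (l ++ x) (l ++ y) :=
  Relation.ReflTransGen.lift (fun z => l ++ z) (fun _ _ hh => bstep_left l hh) _ _ h

lemma rtg_right (r : List Bool) {x y : List Bool}
    (h : Relation.ReflTransGen BStep x y) :
    Relation.ReflTransGen BStep (x ++ r) (y ++ r) :=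
  Relation.ReflTransGen.lift (fun z => z ++ r) (fun _ _ hh => bstep_right r hh) _ _ h

lemma mid : ∀ b c : ℕ,
    Relation.ReflTransGen BStep
      (List.replicate b true ++ List.replicate c false)
      (List.replicate (c - b) false ++ List.replicate (b - c) true)
  | 0, c => by simp [Relation.ReflTransGen.refl]
  | b + 1, 0 => by simp [Relation.ReflTransGen.refl]
  | b + 1, c + 1 => by
    have h1 : BStep (List.replicate (b + 1) true ++ List.replicate (c + 1) false)
        (List.replicate b true ++ List.replicate c false) := by
      have heq : List.replicate (b + 1) true ++ List.replicate (c + 1) false =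
          List.replicate b true ++ [true, false] ++ List.replicate c false := by
        rw [List.replicate_succ', List.replicate_succ]
        simp [List.append_assoc]
      rw [heq]
      exact BStep.mk (List.replicate b true) (List.replicate c false)
    simpa [Nat.succ_sub_succ] using Relation.ReflTransGen.head h1 (mid b c)

/-- If `red(s) = )^a (^b` and `red(t) = )^c (^d`, then
`red(s ++ t) = )^(a + max(c-b,0)) (^(d + max(b-c,0))` (truncated subtraction on `ℕ`). -/
theorem bracket_reduction_append (s t : List Bool) (a b c d : ℕ)
    (hs : Relation.ReflTransGen BStep s
      (List.replicate a false ++ List.replicate b true))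
    (ht : Relation.ReflTransGen BStep t
      (List.replicate c false ++ List.replicate d true)) :
    Relation.ReflTransGen BStep (s ++ t)
      (List.replicate (a + (c - b)) false ++ List.replicate (d + (b - c)) true) := by
  have h1 : Relation.ReflTransGen BStep (s ++ t)
      ((List.replicate a false ++ List.replicate b true) ++
       (List.replicate c false ++ List.replicate d true)) :=
    (rtg_right t hs).trans (rtg_left _ ht)
  have h2 := rtg_left (List.replicate a false)
    (rtg_right (List.replicate d true) (mid b c))
  refine h1.trans ?_
  have heq1 : (List.replicate a false ++ List.replicate b true) ++
      (List.replicate c false ++ List.replicate d true) =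
      List.replicate a false ++ ((List.replicate b true ++ List.replicate c false) ++
        List.replicate d true) := by
    simp only [List.append_assoc]
  have heq2 : List.replicate a false ++ ((List.replicate (c - b) false ++
      List.replicate (b - c) true) ++ List.replicate d true) =
      List.replicate (a + (c - b)) false ++ List.replicate (d + (b - c)) true := by
    rw [List.replicate_add a (c - b), Nat.add_comm d (b - c), List.replicate_add (b - c) d]
    simp only [List.append_assoc]
  rw [heq1, ← heq2]
  exact h2
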